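/- Let L be an even lattice of odd rank n and determinant 2, let v ∈ L generate an isotropic line x of L/2L (q(v) ≡ 0 mod 2, v ∉ 2L), and suppose a₁,…,a_n is a ℤ-basis of L with a_j·v odd for some j. Then the ℤ-span of the set {(a_j·v)·a_i − (a_i·v)·a_j | 1 ≤ i ≤ n} ∪ {2a_i | 1 ≤ i ≤ n} ∪ {(1/2)(v − (v·v/2)·a_j)} equals the 2-neighbor L_x of L associated to x. -/

import Mathlib

open scoped InnerProductSpace

lemma inner_zsmul_left' {V : Type*} [NormedAddCommGroup V] [InnerProductSpace ℝ V]
    (k : ℤ) (x y : V) : ⟪k • x, y⟫_ℝ = (k : ℝ) * ⟪x, y⟫_ℝ := by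
  rw [← Int.cast_smul_eq_zsmul ℝ, real_inner_smul_left]

/-- Generators for the `2`-neighbor `L_x` of an even lattice `L` of odd
rank `n` and determinant `2`, associated to the isotropic line `x` of `L/2L` generated
by `v`, given a `ℤ`-basis `a₁, …, a_n` of `L` and an index `j` with `a_j·v` odd.
Here `Mx` is the preimage of `x^⊥` in `L`, `q(v) = v·v/2 = mq`, and
`L_x = Mx + ℤ·(1/2)(v - mq·a_j)`. -/
theorem two_neighbor_generators
    {V : Type*} [NormedAddCommGroup V] [InnerProductSpace ℝ V]
    (n : ℕ) (hodd : Odd n)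
    (L : Submodule ℤ V)
    (hint : ∀ x ∈ L, ∀ y ∈ L, ∃ m : ℤ, ⟪x, y⟫_ℝ = m)
    (heven : ∀ x ∈ L, ∃ m : ℤ, ⟪x, x⟫_ℝ = 2 * m)
    (b : Module.Basis (Fin n) ℤ ↥L)
    (hdet : (Matrix.of fun i j => ⟪(b i : V), (b j : V)⟫_ℝ).det = 2)
    (v : ↥L) (mq : ℤ) (hmq : ⟪(v : V), (v : V)⟫_ℝ = 2 * mq) (hq2 : Even mq)
    (hv2 : ¬ ∃ w : ↥L, (v : V) = (2 : ℤ) • (w : V))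
    (m : Fin n → ℤ) (hm : ∀ i, ⟪(b i : V), (v : V)⟫_ℝ = m i)
    (j : Fin n) (hj : Odd (m j))
    (Mx : Submodule ℤ V)
    (hMx : ∀ y : V, y ∈ Mx ↔ y ∈ L ∧ ∃ c : ℤ, ⟪y, (v : V)⟫_ℝ = 2 * c) :
    Submodule.span ℤ
        ((Set.range fun i : Fin n => m j • (b i : V) - m i • (b j : V)) ∪
          (Set.range fun i : Fin n => (2 : ℤ) • (b i : V)) ∪
          {(2⁻¹ : ℝ) • ((v : V) - mq • (b j : V))}) =
      Mx ⊔ Submodule.span ℤ {(2⁻¹ : ℝ) • ((v : V) - mq • (b j : V))} := by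
  classical
  rw [Submodule.span_union]
  congr 1
  apply le_antisymm
  · rw [Submodule.span_le]
    rintro z (⟨i, rfl⟩ | ⟨i, rfl⟩)
    · rw [SetLike.mem_coe, hMx]
      refine ⟨L.sub_mem (L.smul_mem _ (b i).2) (L.smul_mem _ (b j).2), 0, ?_⟩
      rw [inner_sub_left, inner_zsmul_left', inner_zsmul_left', hm, hm]
      push_cast
      ring
    · rw [SetLike.mem_coe, hMx]
      refine ⟨L.smul_mem _ (b i).2, m i, ?_⟩
      rw [inner_zsmul_left', hm]
      push_cast
      ring
  · intro y hy
    obtain ⟨hyL, c, hc⟩ := (hMx y).mp hy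
    set P := Submodule.span ℤ
        ((Set.range fun i : Fin n => m j • (b i : V) - m i • (b j : V)) ∪
          (Set.range fun i : Fin n => (2 : ℤ) • (b i : V))) with hP
    set yL : ↥L := ⟨y, hyL⟩ with hyLdef
    set cf : Fin n → ℤ := fun i => b.repr yL i with hcf
    have hz : y = ∑ i, cf i • (b i : V) := by
      conv_lhs => rw [show y = (yL : V) from rfl, ← b.sum_repr yL]
      simp [hcf]
      nth_rw 1 [← b.sum_repr yL]
      rw [Submodule.coe_sum]
      simp only [Submodule.coe_smul]
    have hsum : ∑ i, cf i * m i = 2 * c := by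
      have h1 : ⟪y, (v : V)⟫_ℝ = ∑ i, (cf i : ℝ) * (m i : ℝ) := by
        rw [hz, sum_inner]
        exact Finset.sum_congr rfl fun i _ => by rw [inner_zsmul_left', hm]
      rw [hc] at h1
      exact_mod_cast h1.symm
    have h2y : (2 : ℤ) • y ∈ P := by
      rw [hz, Finset.smul_sum]
      refine Submodule.sum_mem _ fun i _ => ?_
      rw [smul_comm]
      exact Submodule.smul_mem _ _ (Submodule.subset_span (Or.inr ⟨i, rfl⟩))
    have hmjy : m j • y ∈ P := by
      have e : m j • y = (∑ i, cf i • (m j • (b i : V) - m i • (b j : V)))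
          + c • ((2 : ℤ) • (b j : V)) := by
        rw [hz, Finset.smul_sum,
          show c • ((2:ℤ) • (b j : V)) = ∑ i, (cf i * m i) • (b j : V) by
            rw [← Finset.sum_smul, hsum, smul_smul, mul_comm],
          ← Finset.sum_add_distrib]
        refine Finset.sum_congr rfl fun i _ => ?_
        rw [smul_sub, smul_smul, smul_smul, smul_smul, mul_comm (m j) (cf i),
          sub_add_cancel]
      rw [e]
      exact P.add_mem
        (Submodule.sum_mem _ fun i _ =>
          Submodule.smul_mem _ _ (Submodule.subset_span (Or.inl ⟨i, rfl⟩)))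
        (Submodule.smul_mem _ _ (Submodule.subset_span (Or.inr ⟨j, rfl⟩)))
    obtain ⟨k, hk⟩ := hj
    have hy' : y = m j • y - k • ((2 : ℤ) • y) := by
      rw [smul_smul, ← sub_smul, hk]
      have : (2 * k + 1) - k * 2 = (1 : ℤ) := by ring
      rw [this, one_smul]
    rw [hy']
    exact P.sub_mem hmjy (P.smul_mem k h2y)
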